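/- Let S be a finite alphabet with complementation, V ⊆ S^d a polybox code, and w ∈ S^d \ V with w̌ ⊆ ⋃_{v ∈ V} v̌. Suppose there are i ∈ [d] and l ∈ S with l ∉ {w_i, w_i'} such that exactly one word v ∈ V satisfies v_i = l and w̌ ∩ v̌ ≠ ∅, and the number of words v ∈ V with v_i = l' and w̌ ∩ v̌ ≠ ∅ is at least 1 and at most 4. Then V contains a twin pair. -/

import Mathlib

/-- `ES` is the set of all `B ⊆ S` containing exactly one letter from each
complementary pair `{s, s'}`. -/
def ESet {S : Type*} (c : S → S) : Set (Set S) :=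
  {B | ∀ s, s ∈ B ↔ c s ∉ B}

/-- `Es = {B ∈ ES : s ∈ B}`. -/
def Eltr {S : Type*} (c : S → S) (s : S) : Set (Set S) :=
  {B | B ∈ ESet c ∧ s ∈ B}

/-- The equicomplementary realization `v̌ = Ev₁ × ⋯ × Ev_d` of a word `v ∈ S^d`,
viewed as a box in the `d`-box `(ES)^d`. -/
def realize {S : Type*} (c : S → S) {d : ℕ} (v : Fin d → S) :
    Set (Fin d → Set S) :=
  {B | ∀ i, B i ∈ Eltr c (v i)}

/-- Words `u, v ∈ S^d` are dichotomous: some coordinate carries complementary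
letters. -/
def Dichotomous {S : Type*} (c : S → S) {d : ℕ} (u v : Fin d → S) : Prop :=
  ∃ j, v j = c (u j)

/-- Words `u, v ∈ S^d` form a twin pair. -/
def TwinPair {S : Type*} (c : S → S) {d : ℕ} (u v : Fin d → S) : Prop :=
  ∃ j, v j = c (u j) ∧ ∀ i, i ≠ j → u i = v i

/-- A polybox code: a set of pairwise dichotomous words. -/
def PolyboxCode {S : Type*} (c : S → S) {d : ℕ} (V : Set (Fin d → S)) : Prop :=
  ∀ u ∈ V, ∀ v ∈ V, u ≠ v → Dichotomous c u v

/-- Polybox codes `V, W ⊆ S^d` are equivalent if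
`⋃_{v ∈ V} v̌ = ⋃_{w ∈ W} w̌`. -/
def Equivalent {S : Type*} (c : S → S) {d : ℕ}
    (V W : Set (Fin d → S)) : Prop :=
  (⋃ v ∈ V, realize c v) = ⋃ w ∈ W, realize c w

/-- A polybox code `V ⊆ S^d` is rigid if every polybox code equivalent to `V`
equals `V`. -/
def Rigid {S : Type*} (c : S → S) {d : ℕ} (V : Set (Fin d → S)) : Prop :=
  ∀ W : Set (Fin d → S), PolyboxCode c W → Equivalent c V W → W = V

namespace TwinPairAux

variable {ι : Type*} [Fintype ι] [DecidableEq ι]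

def HMem (p : ι → Option Bool) (z : ι → Bool) : Prop :=
  ∀ x b, p x = some b → z x = b

instance (p : ι → Option Bool) : DecidablePred (HMem p) := fun z =>
  decidable_of_iff (∀ x b, p x = some b → z x = b) Iff.rfl

noncomputable def hsupp (p : ι → Option Bool) : Finset ι :=
  Finset.univ.filter (fun x => (p x).isSome)

omit [DecidableEq ι] in
lemma mem_hsupp {p : ι → Option Bool} {x : ι} : x ∈ hsupp p ↔ (p x).isSome := by
  simp [hsupp]

noncomputable def memEquiv (p : ι → Option Bool) :
    {z : ι → Bool // HMem p z} ≃ ({x : ι // p x = none} → Bool) where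
  toFun z x := z.1 x.1
  invFun f :=
    ⟨fun x => (p x).getD (if h : p x = none then f ⟨x, h⟩ else true),
     by intro x b hb; simp [hb]⟩
  left_inv z := by
    apply Subtype.ext; funext x
    rcases h : p x with _ | b
    · simp [h]
    · simp [h, z.2 x b h]
  right_inv f := by funext x; simp [x.2]

open Finset in
lemma card_hmem (p : ι → Option Bool) :
    (Finset.univ.filter (fun z : ι → Bool => HMem p z)).card
      = 2 ^ (Fintype.card ι - (hsupp p).card) := by
  classical
  have h1 : (Finset.univ.filter (fun z : ι → Bool => HMem p z)).card
      = Fintype.card {z : ι → Bool // HMem p z} := by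
    rw [Fintype.card_subtype]
  rw [h1, Fintype.card_congr (memEquiv p), Fintype.card_fun, Fintype.card_bool]
  congr 1
  have h2 : Fintype.card {x : ι // p x = none}
      = (Finset.univ.filter (fun x : ι => p x = none)).card := Fintype.card_subtype _
  rw [h2]
  have h3 := Finset.card_filter_add_card_filter_not
    (s := (Finset.univ : Finset ι)) (p := fun x => (p x).isSome)
  have h4 : (Finset.univ.filter (fun x : ι => ¬ (p x).isSome)).card
      = (Finset.univ.filter (fun x : ι => p x = none)).card := by
    congr 1
    apply Finset.filter_congr
    intro x _
    simp [Option.isSome_iff_ne_none]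
  have h5 : (hsupp p).card = (Finset.univ.filter (fun x : ι => (p x).isSome)).card := rfl
  have h6 : (Finset.univ : Finset ι).card = Fintype.card ι := Finset.card_univ
  omega

lemma exists_twin {κ : Type*} [DecidableEq κ] :
    ∀ (n : ℕ) (T : Finset κ) (p : κ → ι → Option Bool) (ρ : ι → Option Bool),
      T.card = n → 2 ≤ n → n ≤ 4 →
      (∀ t ∈ T, ∀ x b, ρ x = some b → p t x = some b) →
      (∀ s ∈ T, ∀ t ∈ T, s ≠ t → ∃ x b, p s x = some b ∧ p t x = some (!b)) →
      (∀ z : ι → Bool, HMem ρ z → ∃ t ∈ T, HMem (p t) z) →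
      ∃ s ∈ T, ∃ t ∈ T, s ≠ t ∧ ∃ x₀ b, p s x₀ = some b ∧ p t x₀ = some (!b) ∧
        ∀ x, x ≠ x₀ → p s x = p t x := by
  intro n
  induction n using Nat.strong_induction_on with
  | _ n IH =>
  intro T p ρ hcard hn2 hn4 hfix hdisj hcov
  classical
  set N := Fintype.card ι with hN
  have hsub : ∀ t ∈ T, hsupp ρ ⊆ hsupp (p t) := by
    intro t ht x hx
    rw [mem_hsupp] at hx ⊢
    obtain ⟨b, hb⟩ := Option.isSome_iff_exists.mp hx
    rw [hfix t ht x b hb]; rfl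
  have hagree : ∀ t ∈ T, ∀ x ∈ hsupp ρ, p t x = ρ x := by
    intro t ht x hx
    rw [mem_hsupp] at hx
    obtain ⟨b, hb⟩ := Option.isSome_iff_exists.mp hx
    rw [hb, hfix t ht x b hb]
  have hr1 : ∀ t ∈ T, (hsupp ρ).card + 1 ≤ (hsupp (p t)).card := by
    intro t ht
    by_contra hle
    push_neg at hle
    have heq : hsupp ρ = hsupp (p t) :=
      Finset.eq_of_subset_of_card_le (hsub t ht) (by omega)
    have hpt : p t = ρ := by
      funext x
      by_cases hx : x ∈ hsupp ρ
      · exact hagree t ht x hx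
      · have h1 : p t x = none := by
          apply Option.not_isSome_iff_eq_none.mp
          intro h
          exact hx (by rw [heq]; exact mem_hsupp.mpr h)
        have h2 : ρ x = none := by
          apply Option.not_isSome_iff_eq_none.mp
          intro h
          exact hx (mem_hsupp.mpr h)
        rw [h1, h2]
    obtain ⟨s, hsT, hst⟩ := Finset.exists_mem_ne (show 1 < T.card by omega) t
    obtain ⟨x, b, h1, h2⟩ := hdisj t ht s hsT (Ne.symm hst)
    rw [hpt] at h1
    rw [hfix s hsT x b h1] at h2
    simp at h2
  by_cases hex : ∃ σ ∈ T, (hsupp (p σ)).card = (hsupp ρ).card + 1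
  · obtain ⟨σ, hσT, hσc⟩ := hex
    have hdiff : (hsupp (p σ) \ hsupp ρ).card = 1 := by
      rw [Finset.card_sdiff_of_subset (hsub σ hσT)]; omega
    obtain ⟨xs, hxs⟩ := Finset.card_eq_one.mp hdiff
    have hxsm : xs ∈ hsupp (p σ) ∧ xs ∉ hsupp ρ := by
      have h : xs ∈ hsupp (p σ) \ hsupp ρ := by
        rw [hxs]; exact Finset.mem_singleton_self xs
      exact ⟨(Finset.mem_sdiff.mp h).1, (Finset.mem_sdiff.mp h).2⟩
    obtain ⟨a, ha⟩ := Option.isSome_iff_exists.mp (mem_hsupp.mp hxsm.1)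
    have hsuppσ : ∀ x, x ∈ hsupp (p σ) → x ∈ hsupp ρ ∨ x = xs := by
      intro x hx
      by_cases h : x ∈ hsupp ρ
      · exact Or.inl h
      · right
        have h2 : x ∈ hsupp (p σ) \ hsupp ρ := Finset.mem_sdiff.mpr ⟨hx, h⟩
        rw [hxs] at h2; exact Finset.mem_singleton.mp h2
    have hρxs : ρ xs = none :=
      Option.not_isSome_iff_eq_none.mp (fun h => hxsm.2 (mem_hsupp.mpr h))
    have hother : ∀ t ∈ T, t ≠ σ → p t xs = some (!a) := by
      intro t ht htσ
      obtain ⟨x, b, hb1, hb2⟩ := hdisj σ hσT t ht (Ne.symm htσ)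
      have hxm : x ∈ hsupp (p σ) := mem_hsupp.mpr (by rw [hb1]; rfl)
      rcases hsuppσ x hxm with h | h
      · exfalso
        have e1 := hagree t ht x h
        have e2 := hagree σ hσT x h
        rw [e2] at hb1
        rw [e1, hb1] at hb2
        simp at hb2
      · subst h
        rw [ha] at hb1
        injection hb1 with hb1
        subst hb1
        exact hb2
    by_cases hn2' : n = 2
    · have hc1 : (T.erase σ).card = 1 := by
        rw [Finset.card_erase_of_mem hσT]; omega
      obtain ⟨τ, hτ⟩ := Finset.card_eq_one.mp hc1
      have hτm : τ ∈ T.erase σ := by rw [hτ]; exact Finset.mem_singleton_self τ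
      have hτT : τ ∈ T := Finset.mem_of_mem_erase hτm
      have hτσ : τ ≠ σ := Finset.ne_of_mem_erase hτm
      refine ⟨σ, hσT, τ, hτT, Ne.symm hτσ, xs, a, ha, hother τ hτT hτσ, ?_⟩
      intro x hx
      by_cases hxρ : x ∈ hsupp ρ
      · rw [hagree σ hσT x hxρ, hagree τ hτT x hxρ]
      · have hσx : p σ x = none := by
          apply Option.not_isSome_iff_eq_none.mp
          intro h
          rcases hsuppσ x (mem_hsupp.mpr h) with h' | h'
          · exact hxρ h'
          · exact hx h'
        rw [hσx]
        rcases hv : p τ x with _ | v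
        · rfl
        · exfalso
          have hρx : ρ x = none :=
            Option.not_isSome_iff_eq_none.mp (fun h => hxρ (mem_hsupp.mpr h))
          set z : ι → Bool :=
            fun y => (ρ y).getD (if y = xs then !a else if y = x then !v else true) with hz
          have hzρ : HMem ρ z := by intro y b hb; simp [hz, hb]
          obtain ⟨t, htT, htz⟩ := hcov z hzρ
          have hzxs : z xs = !a := by simp [hz, hρxs]
          have hzx : z x = !v := by simp [hz, hρx, hx]
          have htστ : t = σ ∨ t = τ := by
            by_cases h : t = σ
            · exact Or.inl h
            · right
              have h2 : t ∈ T.erase σ := Finset.mem_erase.mpr ⟨h, htT⟩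
              rw [hτ] at h2; exact Finset.mem_singleton.mp h2
          rcases htστ with h | h
          · subst h
            have := htz xs a ha
            rw [hzxs] at this
            simp at this
          · subst h
            have := htz x v hv
            rw [hzx] at this
            simp at this
    · -- n ≥ 3 : recurse on T.erase σ
      set ρ' : ι → Option Bool := fun y => if y = xs then some (!a) else ρ y with hρ'
      have hcard' : (T.erase σ).card = n - 1 := by
        rw [Finset.card_erase_of_mem hσT, hcard]
      have hmain := IH (n-1) (by omega) (T.erase σ) p ρ' hcard' (by omega) (by omega)
        ?_ ?_ ?_
      · obtain ⟨s, hs, t, ht, h⟩ := hmain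
        exact ⟨s, Finset.mem_of_mem_erase hs, t, Finset.mem_of_mem_erase ht, h⟩
      · intro t ht x b hb
        by_cases h : x = xs
        · subst h
          simp only [hρ', if_pos rfl] at hb
          injection hb with hb
          rw [← hb]
          exact hother t (Finset.mem_of_mem_erase ht) (Finset.ne_of_mem_erase ht)
        · simp only [hρ', if_neg h] at hb
          exact hfix t (Finset.mem_of_mem_erase ht) x b hb
      · intro s hs t ht hst
        exact hdisj s (Finset.mem_of_mem_erase hs) t (Finset.mem_of_mem_erase ht) hst
      · intro z hz
        have hzρ : HMem ρ z := by
          intro y b hb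
          apply hz y b
          have hyxs : y ≠ xs := fun h => by rw [h, hρxs] at hb; simp at hb
          simp only [hρ', if_neg hyxs]
          exact hb
        obtain ⟨t, htT, htz⟩ := hcov z hzρ
        refine ⟨t, Finset.mem_erase.mpr ⟨?_, htT⟩, htz⟩
        intro h
        subst h
        have e1 := htz xs a ha
        have e2 := hz xs (!a) (by simp only [hρ', if_pos rfl])
        rw [e1] at e2
        simp at e2
  · -- all pieces have relative codimension ≥ 2
    push_neg at hex
    have hr2 : ∀ t ∈ T, (hsupp ρ).card + 2 ≤ (hsupp (p t)).card := by
      intro t ht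
      have h1 := hr1 t ht
      have h2 := hex t ht
      omega
    set r := (hsupp ρ).card with hrdef
    have hmN : ∀ t ∈ T, (hsupp (p t)).card ≤ N := by
      intro t ht
      calc (hsupp (p t)).card ≤ (Finset.univ : Finset ι).card := Finset.card_le_univ _
        _ = N := Finset.card_univ
    have hT0 : 0 < T.card := by omega
    have hNr : r + 2 ≤ N := by
      obtain ⟨t0, ht0⟩ := Finset.card_pos.mp hT0
      have := hr2 t0 ht0
      have := hmN t0 ht0
      omega
    set Z := Finset.univ.filter (fun z : ι → Bool => HMem ρ z) with hZ
    have hZcard : Z.card = 2 ^ (N - r) := card_hmem ρ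
    have hdisjZ : ∀ s ∈ T, ∀ t ∈ T, s ≠ t →
        Disjoint (Finset.univ.filter (fun z : ι → Bool => HMem (p s) z))
          (Finset.univ.filter (fun z : ι → Bool => HMem (p t) z)) := by
      intro s hs t ht hst
      rw [Finset.disjoint_left]
      intro z hzs hzt
      rw [Finset.mem_filter] at hzs hzt
      obtain ⟨x, b, h1, h2⟩ := hdisj s hs t ht hst
      have e1 := hzs.2 x b h1
      have e2 := hzt.2 x (!b) h2
      rw [e1] at e2
      simp at e2
    have hZU : Z = T.biUnion
        (fun t => Finset.univ.filter (fun z : ι → Bool => HMem (p t) z)) := by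
      ext z
      simp only [hZ, Finset.mem_biUnion, Finset.mem_filter, Finset.mem_univ, true_and]
      constructor
      · intro h; exact hcov z h
      · rintro ⟨t, ht, hz⟩
        intro x b hb
        exact hz x b (hfix t ht x b hb)
    have hsum : Z.card = ∑ t ∈ T, 2 ^ (N - (hsupp (p t)).card) := by
      rw [hZU, Finset.card_biUnion hdisjZ]
      exact Finset.sum_congr rfl (fun t _ => card_hmem (p t))
    have hterm : ∀ t ∈ T, 2 ^ (N - (hsupp (p t)).card) ≤ 2 ^ (N - (r+2)) := by
      intro t ht
      apply Nat.pow_le_pow_right (by norm_num)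
      have := hr2 t ht
      omega
    have hXpos : 0 < 2 ^ (N - (r+2)) := Nat.pow_pos (by norm_num)
    have hpow : 2 ^ (N - r) = 4 * 2 ^ (N - (r+2)) := by
      have h : N - r = (N - (r+2)) + 2 := by omega
      rw [h, pow_add]
      ring
    have hn4' : n = 4 := by
      by_contra h
      have hn3 : n ≤ 3 := by omega
      have hb : Z.card ≤ n * 2 ^ (N - (r+2)) := by
        rw [hsum]
        calc ∑ t ∈ T, 2 ^ (N - (hsupp (p t)).card)
            ≤ ∑ _t ∈ T, 2 ^ (N - (r+2)) := Finset.sum_le_sum hterm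
          _ = n * 2 ^ (N - (r+2)) := by
              rw [Finset.sum_const, hcard, smul_eq_mul]
      rw [hZcard, hpow] at hb
      nlinarith
    have hall : ∀ t ∈ T, (hsupp (p t)).card = r + 2 := by
      by_contra h
      push_neg at h
      obtain ⟨t0, ht0, hne0⟩ := h
      have h3 : r + 3 ≤ (hsupp (p t0)).card := by
        have := hr2 t0 ht0; omega
      have hstrict : 2 ^ (N - (hsupp (p t0)).card) < 2 ^ (N - (r+2)) := by
        apply Nat.pow_lt_pow_right (by norm_num)
        have := hmN t0 ht0
        omega
      have hlt : Z.card < ∑ _t ∈ T, 2 ^ (N - (r+2)) := by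
        rw [hsum]
        exact Finset.sum_lt_sum hterm ⟨t0, ht0, hstrict⟩
      rw [Finset.sum_const, hcard, smul_eq_mul, hn4', hZcard, hpow] at hlt
      omega
    -- endgame : n = 4, all pieces of relative codimension 2
    have hC : ∀ t ∈ T, (hsupp (p t) \ hsupp ρ).card = 2 := by
      intro t ht
      rw [Finset.card_sdiff_of_subset (hsub t ht), hall t ht]
      omega
    obtain ⟨σ, hσT⟩ := Finset.card_pos.mp hT0
    obtain ⟨x, y, hxy, hCxy⟩ := Finset.card_eq_two.mp (hC σ hσT)
    by_contra hno
    have key : ∀ s ∈ T, ∀ t ∈ T, s ≠ t → ∀ e, e ∈ hsupp (p s) → e ∉ hsupp ρ →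
        p s e = p t e → False := by
      intro s hs t ht hst e hes heρ heq
      apply hno
      obtain ⟨x', b', h1, h2⟩ := hdisj s hs t ht hst
      have hx'ρ : x' ∉ hsupp ρ := by
        intro hm
        have e1 := hagree s hs x' hm
        have e2 := hagree t ht x' hm
        rw [e1] at h1
        rw [e2, h1] at h2
        simp at h2
      have hx'e : x' ≠ e := by
        intro h
        subst h
        rw [heq, h2] at h1
        simp at h1
      have het : e ∈ hsupp (p t) := by
        rw [mem_hsupp, ← heq, ← mem_hsupp]
        exact hes
      have hpair : ({e, x'} : Finset ι).card = 2 := Finset.card_pair (Ne.symm hx'e)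
      have hCs : hsupp (p s) \ hsupp ρ = {e, x'} := by
        symm
        apply Finset.eq_of_subset_of_card_le
        · intro u hu
          rw [Finset.mem_insert, Finset.mem_singleton] at hu
          rcases hu with h | h
          · subst h; exact Finset.mem_sdiff.mpr ⟨hes, heρ⟩
          · subst h
            exact Finset.mem_sdiff.mpr ⟨mem_hsupp.mpr (by rw [h1]; rfl), hx'ρ⟩
        · rw [hC s hs, hpair]
      have hCt : hsupp (p t) \ hsupp ρ = {e, x'} := by
        symm
        apply Finset.eq_of_subset_of_card_le
        · intro u hu
          rw [Finset.mem_insert, Finset.mem_singleton] at hu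
          rcases hu with h | h
          · subst h; exact Finset.mem_sdiff.mpr ⟨het, heρ⟩
          · subst h
            exact Finset.mem_sdiff.mpr ⟨mem_hsupp.mpr (by rw [h2]; rfl), hx'ρ⟩
        · rw [hC t ht, hpair]
      refine ⟨s, hs, t, ht, hst, x', b', h1, h2, ?_⟩
      intro u hu
      by_cases hρu : u ∈ hsupp ρ
      · rw [hagree s hs u hρu, hagree t ht u hρu]
      · by_cases heu : u = e
        · subst heu; exact heq
        · have hu1 : p s u = none := by
            apply Option.not_isSome_iff_eq_none.mp
            intro hh
            have hmem : u ∈ hsupp (p s) \ hsupp ρ :=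
              Finset.mem_sdiff.mpr ⟨mem_hsupp.mpr hh, hρu⟩
            rw [hCs, Finset.mem_insert, Finset.mem_singleton] at hmem
            tauto
          have hu2 : p t u = none := by
            apply Option.not_isSome_iff_eq_none.mp
            intro hh
            have hmem : u ∈ hsupp (p t) \ hsupp ρ :=
              Finset.mem_sdiff.mpr ⟨mem_hsupp.mpr hh, hρu⟩
            rw [hCt, Finset.mem_insert, Finset.mem_singleton] at hmem
            tauto
          rw [hu1, hu2]
    -- each other piece shares a coordinate with σ within {x,y}
    have hEt : ∀ t, t ∈ T.erase σ → ∃ e, e ∈ ({x, y} : Finset ι) ∧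
        e ∈ hsupp (p t) \ hsupp ρ := by
      intro t hte
      have ht : t ∈ T := Finset.mem_of_mem_erase hte
      have htσ : t ≠ σ := Finset.ne_of_mem_erase hte
      obtain ⟨x', b', h1, h2⟩ := hdisj σ hσT t ht (Ne.symm htσ)
      have hx'ρ : x' ∉ hsupp ρ := by
        intro hm
        have e1 := hagree σ hσT x' hm
        have e2 := hagree t ht x' hm
        rw [e1] at h1
        rw [e2, h1] at h2
        simp at h2
      refine ⟨x', ?_, ?_⟩
      · rw [← hCxy]
        exact Finset.mem_sdiff.mpr ⟨mem_hsupp.mpr (by rw [h1]; rfl), hx'ρ⟩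
      · exact Finset.mem_sdiff.mpr ⟨mem_hsupp.mpr (by rw [h2]; rfl), hx'ρ⟩
    classical
    set f : κ → ι := fun t => if h : t ∈ T.erase σ then (hEt t h).choose else x with hf
    have hmapsto : ∀ t ∈ T.erase σ, f t ∈ ({x, y} : Finset ι) := by
      intro t ht
      rw [hf]
      simp only [dif_pos ht]
      exact (hEt t ht).choose_spec.1
    have hfC : ∀ t (h : t ∈ T.erase σ), f t ∈ hsupp (p t) \ hsupp ρ := by
      intro t ht
      rw [hf]
      simp only [dif_pos ht]
      exact (hEt t ht).choose_spec.2
    have hcard3 : ({x, y} : Finset ι).card < (T.erase σ).card := by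
      rw [Finset.card_erase_of_mem hσT, hcard, hn4', Finset.card_pair hxy]
      omega
    obtain ⟨s, hse, t, hte, hst, hfeq⟩ :=
      Finset.exists_ne_map_eq_of_card_lt_of_maps_to hcard3 hmapsto
    set e := f s with he
    have hsC := hfC s hse
    have htC := hfC t hte
    rw [← hfeq] at htC
    have heσ : e ∈ hsupp (p σ) \ hsupp ρ := by
      rw [hCxy]
      exact hmapsto s hse
    have hsT : s ∈ T := Finset.mem_of_mem_erase hse
    have htT : t ∈ T := Finset.mem_of_mem_erase hte
    have hsσ : s ≠ σ := Finset.ne_of_mem_erase hse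
    have htσ : t ≠ σ := Finset.ne_of_mem_erase hte
    obtain ⟨v0, hv0⟩ := Option.isSome_iff_exists.mp (mem_hsupp.mp (Finset.mem_sdiff.mp heσ).1)
    obtain ⟨v1, hv1⟩ := Option.isSome_iff_exists.mp (mem_hsupp.mp (Finset.mem_sdiff.mp hsC).1)
    obtain ⟨v2, hv2⟩ := Option.isSome_iff_exists.mp (mem_hsupp.mp (Finset.mem_sdiff.mp htC).1)
    have heρ' : e ∉ hsupp ρ := (Finset.mem_sdiff.mp hsC).2
    have k1 : v1 ≠ v0 := by
      intro h
      exact key s hsT σ hσT hsσ e (Finset.mem_sdiff.mp hsC).1 heρ'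
        (by rw [hv1, hv0, h])
    have k2 : v2 ≠ v0 := by
      intro h
      exact key t htT σ hσT htσ e (Finset.mem_sdiff.mp htC).1 heρ'
        (by rw [hv2, hv0, h])
    have k3 : v1 ≠ v2 := by
      intro h
      exact key s hsT t htT hst e (Finset.mem_sdiff.mp hsC).1 heρ'
        (by rw [hv1, hv2, h])
    revert k1 k2 k3
    cases v0 <;> cases v1 <;> cases v2 <;> decide


section Geometry

variable {S : Type*} [Fintype S] {c : S → S}

lemma mem_realize_iff {d : ℕ} {v : Fin d → S} {B : Fin d → Set S} :
    B ∈ realize c v ↔ ∀ j, B j ∈ ESet c ∧ v j ∈ B j := Iff.rfl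

lemma eset_iff {X : Set S} (hX : X ∈ ESet c) (s : S) : s ∈ X ↔ c s ∉ X := hX s

lemma exists_transversal (hinv : ∀ s, c (c s) = s) (hne : ∀ s, c s ≠ s)
    (P : Set S) (hP : ∀ s ∈ P, c s ∉ P) :
    ∃ B ∈ ESet c, P ⊆ B := by
  classical
  obtain ⟨e⟩ : Nonempty (S ≃ Fin (Fintype.card S)) := ⟨Fintype.equivFin S⟩
  refine ⟨{s | s ∈ P ∨ (s ∉ P ∧ c s ∉ P ∧ e s < e (c s))}, ?_, fun s hs => Or.inl hs⟩
  intro s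
  have hcc := hinv s
  simp only [Set.mem_setOf_eq, hcc]
  by_cases hsP : s ∈ P
  · constructor
    · intro _
      rintro (h | ⟨_, h2, _⟩)
      · exact hP s hsP h
      · exact h2 hsP
    · intro _
      exact Or.inl hsP
  · by_cases hcsP : c s ∈ P
    · constructor
      · rintro (h | ⟨_, h2, _⟩)
        · exact absurd h hsP
        · exact absurd hcsP h2
      · intro h
        exact absurd (Or.inl hcsP) h
    · have hes : e s ≠ e (c s) := fun hh => hne s (e.injective hh).symm
      constructor
      · rintro (h | ⟨_, _, h3⟩)
        · exact absurd h hsP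
        · rintro (h | ⟨_, _, h4⟩)
          · exact hcsP h
          · exact lt_asymm h3 h4
      · intro h
        right
        refine ⟨hsP, hcsP, ?_⟩
        rcases lt_or_gt_of_ne hes with h' | h'
        · exact h'
        · exact absurd (Or.inr ⟨hcsP, hsP, h'⟩) h

lemma exists_point (hinv : ∀ s, c (c s) = s) (hne : ∀ s, c s ≠ s) {d : ℕ}
    (P : Fin d → Set S) (hP : ∀ j, ∀ s ∈ P j, c s ∉ P j) :
    ∃ B : Fin d → Set S, ∀ j, B j ∈ ESet c ∧ P j ⊆ B j := by
  choose B h1 h2 using fun j => exists_transversal hinv hne (P j) (hP j)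
  exact ⟨B, fun j => ⟨h1 j, h2 j⟩⟩

lemma flip_ESet (hinv : ∀ s, c (c s) = s) (hne : ∀ s, c s ≠ s)
    {X : Set S} (hX : X ∈ ESet c) (s : S) :
    (X \ {c s}) ∪ {s} ∈ ESet c := by
  have hcinj : Function.Injective c := fun a b h => by rw [← hinv a, h, hinv]
  intro t
  simp only [Set.mem_union, Set.mem_diff, Set.mem_singleton_iff]
  by_cases h1 : t = s
  · subst h1
    constructor
    · intro _
      rintro (⟨_, h⟩ | h)
      · exact h rfl
      · exact hne t h
    · intro _
      exact Or.inr rfl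
  · by_cases h2 : t = c s
    · subst h2
      rw [hinv]
      constructor
      · rintro (⟨_, h⟩ | h)
        · exact absurd rfl h
        · exact absurd h (hne s)
      · intro h
        exact absurd (Or.inr rfl) h
    · have h3 : c t ≠ c s := fun hh => h1 (hcinj hh)
      have h4 : c t ≠ s := fun hh => h2 (by rw [← hinv t, hh])
      constructor
      · rintro (⟨ht, _⟩ | h)
        · rintro (⟨hct, _⟩ | hct)
          · exact (hX t).mp ht hct
          · exact h4 hct
        · exact absurd h h1
      · intro h
        left
        refine ⟨?_, h2⟩
        rw [eset_iff hX]
        intro hct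
        exact h (Or.inl ⟨hct, h3⟩)

lemma mem_flip_self {X : Set S} (s : S) : s ∈ (X \ {c s}) ∪ {s} := Or.inr rfl

lemma compl_not_mem_flip (hne : ∀ s, c s ≠ s) {X : Set S} (s : S) :
    c s ∉ (X \ {c s}) ∪ {s} := by
  rintro (⟨_, h⟩ | h)
  · exact h rfl
  · exact hne s h

lemma mem_flip_other {X : Set S} {s t : S} (ht1 : t ≠ s) (ht2 : t ≠ c s) :
    t ∈ (X \ {c s}) ∪ {s} ↔ t ∈ X := by
  simp only [Set.mem_union, Set.mem_diff, Set.mem_singleton_iff]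
  constructor
  · rintro (⟨h, _⟩ | h)
    · exact h
    · exact absurd h ht1
  · intro h
    exact Or.inl ⟨h, ht2⟩

end Geometry

end TwinPairAux

open TwinPairAux in
/-- Suppose `w ∈ S^d \ V` is covered by the polybox code `V`, and for some
`i ∈ [d]` and letter `l ∉ {w_i, w_i'}` exactly one word `v ∈ V` with `v_i = l`
meets `w̌`, while the number of words `v ∈ V` with `v_i = l'` meeting `w̌` is
between 1 and 4. Then `V` contains a twin pair. -/
theorem twinPair_of_single_word_cylinder {S : Type*} [Fintype S] (c : S → S)
    (hinv : ∀ s, c (c s) = s) (hne : ∀ s, c s ≠ s) {d : ℕ}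
    (V : Set (Fin d → S)) (hV : PolyboxCode c V)
    (w : Fin d → S) (hw : w ∉ V)
    (hcov : realize c w ⊆ ⋃ v ∈ V, realize c v)
    (i : Fin d) (l : S) (hl : l ≠ w i) (hl' : l ≠ c (w i))
    (h1 : {v ∈ V | v i = l ∧ (realize c w ∩ realize c v).Nonempty}.ncard = 1)
    (h2 : 1 ≤ {v ∈ V | v i = c l ∧ (realize c w ∩ realize c v).Nonempty}.ncard)
    (h3 : {v ∈ V | v i = c l ∧ (realize c w ∩ realize c v).Nonempty}.ncard ≤ 4) :
    ∃ u ∈ V, ∃ v ∈ V, TwinPair c u v := by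
  classical
  have hcinj : Function.Injective c := fun a b h => by rw [← hinv a, h, hinv]
  have hwil : w i ≠ l := Ne.symm hl
  have hwicl : w i ≠ c l := fun h => hl' (by rw [h, hinv])
  have hlcl : l ≠ c l := fun h => hne l h.symm
  obtain ⟨v0, hv0⟩ := Set.ncard_eq_one.mp h1
  have hv0mem : v0 ∈ {v ∈ V | v i = l ∧ (realize c w ∩ realize c v).Nonempty} := by
    rw [hv0]; exact rfl
  obtain ⟨hv0V, hv0i, hv0meet⟩ := hv0mem
  have huniq : ∀ u, u ∈ V → u i = l → (realize c w ∩ realize c u).Nonempty → u = v0 := by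
    intro u ha hb hc
    have hm : u ∈ {v ∈ V | v i = l ∧ (realize c w ∩ realize c v).Nonempty} := ⟨ha, hb, hc⟩
    rw [hv0] at hm
    exact hm
  set Tset := {v ∈ V | v i = c l ∧ (realize c w ∩ realize c v).Nonempty} with hTsetdef
  have hTfin : Tset.Finite := by
    rcases Tset.finite_or_infinite with h | h
    · exact h
    · exfalso
      rw [Set.Infinite.ncard h] at h2
      exact Nat.not_succ_le_zero 0 h2
  have hcompat : ∀ v : Fin d → S, (realize c w ∩ realize c v).Nonempty →
      ∀ j, v j ≠ c (w j) := by
    rintro v ⟨B, hBw, hBv⟩ j h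
    have hb1 := hBw j
    have hb2 := hBv j
    exact ((hb1.1 (w j)).mp hb1.2) (h ▸ hb2.2)
  have hcompat0 : ∀ j, v0 j ≠ c (w j) := hcompat v0 hv0meet
  have hcompatT : ∀ v, v ∈ Tset → ∀ j, v j ≠ c (w j) := fun v hv => hcompat v hv.2.2
  have hdisjR : ∀ u, u ∈ V → ∀ v, v ∈ V → u ≠ v → ∀ B,
      B ∈ realize c u → B ∈ realize c v → False := by
    intro u hu v hv huv B hBu hBv
    obtain ⟨j, hj⟩ := hV u hu v hv huv
    have hb1 := hBu j
    have hb2 := hBv j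
    exact ((hb1.1 (u j)).mp hb1.2) (hj ▸ hb2.2)
  have hcov' : ∀ B, B ∈ realize c w → ∃ u ∈ V, B ∈ realize c u := by
    intro B hB
    have h := hcov hB
    simpa using h
  have claim1 : ∀ v, v ∈ V → v i = c l → ∀ B, B ∈ realize c w → B ∈ realize c v →
      Function.update B i ((B i \ {c l}) ∪ {l}) ∈ realize c w ∧
      Function.update B i ((B i \ {c l}) ∪ {l}) ∈ realize c v0 := by
    intro v hvV hvi B hBw hBv
    set B' := Function.update B i ((B i \ {c l}) ∪ {l}) with hB'def
    have hBiE : B i ∈ ESet c := (hBw i).1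
    have hflipE : ((B i \ {c l}) ∪ {l} : Set S) ∈ ESet c := flip_ESet hinv hne hBiE l
    have hB'i : B' i = (B i \ {c l}) ∪ {l} := Function.update_self _ _ _
    have hB'j : ∀ j, j ≠ i → B' j = B j := fun j hj => Function.update_of_ne hj _ _
    have hB'w : B' ∈ realize c w := by
      intro j
      by_cases h : j = i
      · subst h
        rw [mem_realize_iff] at hBw
        refine ⟨by rw [hB'i]; exact hflipE, ?_⟩
        rw [hB'i]
        exact (mem_flip_other hwil hwicl).mpr (hBw j).2
      · refine ⟨by rw [hB'j j h]; exact (hBw j).1, by rw [hB'j j h]; exact (hBw j).2⟩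
    obtain ⟨u, huV, hBu'⟩ := hcov' B' hB'w
    have hui : u i = l := by
      by_contra huil
      have huicl : u i ≠ c l := by
        intro h
        have hm : u i ∈ B' i := (hBu' i).2
        rw [hB'i, h] at hm
        exact compl_not_mem_flip hne l hm
      have huiB : u i ∈ B i := by
        have hm : u i ∈ B' i := (hBu' i).2
        rw [hB'i] at hm
        exact (mem_flip_other huil huicl).mp hm
      have hBu : B ∈ realize c u := by
        intro j
        by_cases h : j = i
        · subst h
          exact ⟨hBiE, huiB⟩
        · have hm := hBu' j
          rw [hB'j j h] at hm
          exact hm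
      have huv : u = v := by
        by_contra h
        exact hdisjR u huV v hvV h B hBu hBv
      rw [huv, hvi] at huicl
      exact huicl rfl
    have hu0 : u = v0 := huniq u huV hui ⟨B', hB'w, hBu'⟩
    exact ⟨hB'w, hu0 ▸ hBu'⟩
  have claim2 : ∀ B, B ∈ realize c w → B ∈ realize c v0 →
      ∃ u, u ∈ Tset ∧ Function.update B i ((B i \ {l}) ∪ {c l}) ∈ realize c u := by
    intro B hBw hB0
    set B' := Function.update B i ((B i \ {l}) ∪ {c l}) with hB'def
    have hBiE : B i ∈ ESet c := (hBw i).1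
    have hrw : (B i \ {l} : Set S) = B i \ {c (c l)} := by rw [hinv]
    have hflipE : ((B i \ {l}) ∪ {c l} : Set S) ∈ ESet c := by
      rw [hrw]; exact flip_ESet hinv hne hBiE (c l)
    have hB'i : B' i = (B i \ {l}) ∪ {c l} := Function.update_self _ _ _
    have hB'j : ∀ j, j ≠ i → B' j = B j := fun j hj => Function.update_of_ne hj _ _
    have hwicc : w i ≠ c (c l) := by rw [hinv]; exact hwil
    have hB'w : B' ∈ realize c w := by
      intro j
      by_cases h : j = i
      · subst h
        refine ⟨by rw [hB'i]; exact hflipE, ?_⟩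
        rw [hB'i, hrw]
        exact (mem_flip_other hwicl hwicc).mpr (hBw j).2
      · refine ⟨by rw [hB'j j h]; exact (hBw j).1, by rw [hB'j j h]; exact (hBw j).2⟩
    obtain ⟨u, huV, hBu'⟩ := hcov' B' hB'w
    have hui : u i = c l := by
      by_contra huicl
      have huil : u i ≠ l := by
        intro h
        have hm : u i ∈ B' i := (hBu' i).2
        rw [hB'i, h] at hm
        have hh := compl_not_mem_flip hne (c l) (X := B i)
        rw [hinv] at hh
        exact hh hm
      have huiB : u i ∈ B i := by
        have hm : u i ∈ B' i := (hBu' i).2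
        rw [hB'i, hrw] at hm
        exact (mem_flip_other huicl (by rw [hinv]; exact huil)).mp hm
      have hBu : B ∈ realize c u := by
        intro j
        by_cases h : j = i
        · subst h
          exact ⟨hBiE, huiB⟩
        · have hm := hBu' j
          rw [hB'j j h] at hm
          exact hm
      have hu0 : u = v0 := by
        by_contra h
        exact hdisjR u huV v0 hv0V h B hBu hB0
      rw [hu0, hv0i] at huil
      exact huil rfl
    exact ⟨u, ⟨huV, hui, ⟨B', hB'w, hBu'⟩⟩, hBu'⟩
  have factA : ∀ v, v ∈ Tset → ∀ j, j ≠ i → v0 j ≠ w j → v j = v0 j := by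
    intro v hv j hji hv0j
    by_contra hvj
    obtain ⟨hvV, hvi, hvmeet⟩ := hv
    have hcompatv : ∀ j', v j' ≠ c (w j') := hcompat v hvmeet
    set P : Fin d → Set S :=
      fun j' => if j' = j then {w j, v j, c (v0 j)} else {w j', v j'} with hPdef
    have hPok : ∀ j', ∀ s ∈ P j', c s ∉ P j' := by
      intro j' s hs hcs
      by_cases h : j' = j
      · subst h
        simp only [hPdef, if_pos rfl, Set.mem_insert_iff, Set.mem_singleton_iff] at hs hcs
        rcases hs with h1 | h1 | h1 <;> subst h1 <;> rcases hcs with h2 | h2 | h2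
        · exact hne (w j') h2
        · exact hcompatv j' h2.symm
        · exact hv0j (hcinj h2).symm
        · exact hcompatv j' (by rw [← h2, hinv])
        · exact hne (v j') h2
        · exact hvj (hcinj h2)
        · exact hv0j (by rw [← h2, hinv])
        · exact hvj (by rw [← h2, hinv])
        · exact hne (c (v0 j')) h2
      · simp only [hPdef, if_neg h, Set.mem_insert_iff, Set.mem_singleton_iff] at hs hcs
        rcases hs with h1 | h1 <;> subst h1 <;> rcases hcs with h2 | h2
        · exact hne (w j') h2
        · exact hcompatv j' h2.symm
        · exact hcompatv j' (by rw [← h2, hinv])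
        · exact hne (v j') h2
    obtain ⟨B, hB⟩ := exists_point hinv hne P hPok
    have hwP : ∀ j', w j' ∈ P j' := by
      intro j'
      by_cases h : j' = j
      · subst h; simp only [hPdef, if_pos rfl]; exact Or.inl rfl
      · simp only [hPdef, if_neg h]; exact Or.inl rfl
    have hvP : ∀ j', v j' ∈ P j' := by
      intro j'
      by_cases h : j' = j
      · subst h; simp only [hPdef, if_pos rfl]; exact Or.inr (Or.inl rfl)
      · simp only [hPdef, if_neg h]; exact Or.inr rfl
    have hBw : B ∈ realize c w := fun j' => ⟨(hB j').1, (hB j').2 (hwP j')⟩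
    have hBv : B ∈ realize c v := fun j' => ⟨(hB j').1, (hB j').2 (hvP j')⟩
    have hcB : c (v0 j) ∈ B j := by
      apply (hB j).2
      simp only [hPdef, if_pos rfl]
      exact Or.inr (Or.inr rfl)
    have hfl := (claim1 v hvV hvi B hBw hBv).2
    have hv0B : v0 j ∈ B j := by
      have hm := (hfl j).2
      rwa [Function.update_of_ne hji] at hm
    exact ((hB j).1 (v0 j)).mp hv0B hcB
  rcases eq_or_lt_of_le h2 with hT1 | hT2
  · obtain ⟨v1, hv1⟩ := Set.ncard_eq_one.mp hT1.symm
    have hv1mem : v1 ∈ Tset := by rw [hv1]; exact rfl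
    obtain ⟨hv1V, hv1i, hv1meet⟩ := hv1mem
    have hv1mem' : v1 ∈ Tset := ⟨hv1V, hv1i, hv1meet⟩
    have hagree : ∀ j, j ≠ i → v0 j = v1 j := by
      intro j hji
      by_cases h0 : v0 j = w j
      · by_contra hne1
        have hv1w : v1 j ≠ w j := fun h => hne1 (by rw [h0, h])
        set P : Fin d → Set S :=
          fun j' => if j' = j then {w j, c (v1 j)} else {w j', v0 j'} with hPdef
        have hPok : ∀ j', ∀ s ∈ P j', c s ∉ P j' := by
          intro j' s hs hcs
          by_cases h : j' = j
          · subst h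
            simp only [hPdef, if_pos rfl, Set.mem_insert_iff, Set.mem_singleton_iff] at hs hcs
            rcases hs with h1 | h1 <;> subst h1 <;> rcases hcs with h2 | h2
            · exact hne (w j') h2
            · exact hv1w (hcinj h2).symm
            · exact hv1w (by rw [← hinv (v1 j'), h2])
            · exact hne (c (v1 j')) h2
          · simp only [hPdef, if_neg h, Set.mem_insert_iff, Set.mem_singleton_iff] at hs hcs
            rcases hs with h1 | h1 <;> subst h1 <;> rcases hcs with h2 | h2
            · exact hne (w j') h2
            · exact hcompat0 j' h2.symm
            · exact hcompat0 j' (by rw [← h2, hinv])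
            · exact hne (v0 j') h2
        obtain ⟨B, hB⟩ := exists_point hinv hne P hPok
        have hwP : ∀ j', w j' ∈ P j' := by
          intro j'
          by_cases h : j' = j
          · subst h; simp only [hPdef, if_pos rfl]; exact Or.inl rfl
          · simp only [hPdef, if_neg h]; exact Or.inl rfl
        have hv0P : ∀ j', v0 j' ∈ P j' := by
          intro j'
          by_cases h : j' = j
          · subst h; simp only [hPdef, if_pos rfl]; rw [h0]; exact Or.inl rfl
          · simp only [hPdef, if_neg h]; exact Or.inr rfl
        have hBw : B ∈ realize c w := fun j' => ⟨(hB j').1, (hB j').2 (hwP j')⟩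
        have hB0 : B ∈ realize c v0 := fun j' => ⟨(hB j').1, (hB j').2 (hv0P j')⟩
        have hcB : c (v1 j) ∈ B j := by
          apply (hB j).2
          simp only [hPdef, if_pos rfl]
          exact Or.inr rfl
        obtain ⟨u, huT, hBu'⟩ := claim2 B hBw hB0
        have hu1 : u = v1 := by rw [hv1] at huT; exact huT
        subst hu1
        have hm := (hBu' j).2
        rw [Function.update_of_ne hji] at hm
        exact ((hB j).1 (u j)).mp hm hcB
      · exact (factA v1 hv1mem' j hji h0).symm
    refine ⟨v0, hv0V, v1, hv1V, i, ?_, fun j hj => hagree j hj⟩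
    rw [hv1i, hv0i]
  · -- 2 ≤ |T| ≤ 4 : hypercube argument
    obtain ⟨eS⟩ : Nonempty (S ≃ Fin (Fintype.card S)) := ⟨Fintype.equivFin S⟩
    set rep : S → S := fun s => if eS s < eS (c s) then s else c s with hrepdef
    have hrep_pair : ∀ s, rep s = s ∨ rep s = c s := by
      intro s
      by_cases h : eS s < eS (c s)
      · left; simp only [hrepdef, if_pos h]
      · right; simp only [hrepdef, if_neg h]
    have hrep_compl : ∀ s, rep (c s) = rep s := by
      intro s
      by_cases h : eS s < eS (c s)
      · have h2' : ¬ eS (c s) < eS (c (c s)) := by rw [hinv]; exact lt_asymm h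
        simp only [hrepdef, if_pos h, if_neg h2', hinv]
      · have hne' : eS s ≠ eS (c s) := fun hh => hne s (eS.injective hh).symm
        have h2' : eS (c s) < eS (c (c s)) := by
          rw [hinv]
          rcases lt_or_gt_of_ne hne' with h' | h'
          · exact absurd h' h
          · exact h'
        simp only [hrepdef, if_neg h, if_pos h2']
    set sd : S → Bool := fun s => decide (rep s = s) with hsddef
    have hsd_compl : ∀ s, sd (c s) = ! sd s := by
      intro s
      by_cases h : rep s = s
      · have hscs : ¬ (s = c s) := fun hh => hne s hh.symm
        simp only [hsddef]
        rw [hrep_compl]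
        simp [h, hscs]
      · have h2' : rep s = c s := (hrep_pair s).resolve_left h
        simp only [hsddef]
        rw [hrep_compl]
        simp only [h2', h]
        simp [hne s]
    have hpair_eq : ∀ s t, rep s = rep t → sd s = sd t → s = t := by
      intro s t h1' h2'
      by_cases hs : rep s = s <;> by_cases ht : rep t = t
      · rw [← hs, h1', ht]
      · exfalso; simp only [hsddef] at h2'; simp [hs, ht] at h2'
      · exfalso; simp only [hsddef] at h2'; simp [hs, ht] at h2'
      · have e1 : rep s = c s := (hrep_pair s).resolve_left hs
        have e2 : rep t = c t := (hrep_pair t).resolve_left ht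
        rw [e1, e2] at h1'
        exact hcinj h1'
    have hpair_compl : ∀ s t, rep s = rep t → sd s = ! sd t → s = c t := by
      intro s t h1' h2'
      by_cases ht : rep t = t
      · have hs : rep s ≠ s := by
          intro hs
          simp only [hsddef] at h2'
          simp [hs, ht] at h2'
        have e1 : rep s = c s := (hrep_pair s).resolve_left hs
        rw [e1] at h1'
        have hcs : c s = t := by rw [h1', ht]
        rw [← hcs, hinv]
      · have e2 : rep t = c t := (hrep_pair t).resolve_left ht
        have hs : rep s = s := by
          by_contra hs
          have e1 := (hrep_pair s).resolve_left hs
          simp only [hsddef] at h2'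
          simp [hs, ht] at h2'
        rw [← hs, h1', e2]
    set Tf : Finset (Fin d → S) := hTfin.toFinset with hTfdef
    have hmemTf : ∀ v, v ∈ Tf ↔ v ∈ Tset := fun v => Set.Finite.mem_toFinset hTfin
    have hTfcard : Tf.card = Set.ncard Tset := by
      rw [Set.ncard_eq_toFinset_card Tset hTfin]
    set pp : (Fin d → S) → (Fin d × S) → Option Bool := fun v q =>
      if v0 q.1 = w q.1 ∧ q.1 ≠ i ∧ v q.1 ≠ w q.1 ∧ rep (v q.1) = q.2
      then some (sd (v q.1)) else none with hppdef
    have hdisjP : ∀ u ∈ Tf, ∀ v ∈ Tf, u ≠ v →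
        ∃ q b, pp u q = some b ∧ pp v q = some (!b) := by
      intro u hu v hv huv
      have huT : u ∈ Tset := (hmemTf u).mp hu
      have hvT : v ∈ Tset := (hmemTf v).mp hv
      obtain ⟨j, hj⟩ := hV u huT.1 v hvT.1 huv
      have hji : j ≠ i := by
        intro h
        subst h
        rw [hvT.2.1, huT.2.1, hinv] at hj
        exact hlcl hj.symm
      have hujw : u j ≠ w j := by
        intro h
        apply hcompatT v hvT j
        rw [hj, h]
      have hvjw : v j ≠ w j := by
        intro h
        apply hcompatT u huT j
        have e : u j = c (v j) := by rw [hj, hinv]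
        rw [e, h]
      have hv0j : v0 j = w j := by
        by_contra h
        have e1 := factA u huT j hji h
        have e2 := factA v hvT j hji h
        rw [e1, e2] at hj
        exact hne (v0 j) hj.symm
      refine ⟨(j, rep (u j)), sd (u j), ?_, ?_⟩
      · simp only [hppdef]
        rw [if_pos ⟨hv0j, hji, hujw, trivial⟩]
      · simp only [hppdef]
        have hr' : rep (v j) = rep (u j) := by rw [hj, hrep_compl]
        rw [if_pos ⟨hv0j, hji, hvjw, hr'⟩, hj, hsd_compl]
    have hcovP : ∀ z : Fin d × S → Bool, TwinPairAux.HMem (fun _ => none) z →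
        ∃ t ∈ Tf, TwinPairAux.HMem (pp t) z := by
      intro z _
      have hQex : ∀ j : Fin d, ∃ Q, Q ∈ ESet c ∧ w j ∈ Q ∧
          (if j = i then c l else v0 j) ∈ Q := by
        intro j
        have hcond : ∀ s ∈ ({w j, if j = i then c l else v0 j} : Set S),
            c s ∉ ({w j, if j = i then c l else v0 j} : Set S) := by
          intro s hs hcs
          simp only [Set.mem_insert_iff, Set.mem_singleton_iff] at hs hcs
          by_cases h : j = i
          · subst h
            rw [if_pos rfl] at hs hcs
            rcases hs with h1 | h1 <;> subst h1 <;> rcases hcs with h2 | h2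
            · exact hne (w j) h2
            · exact hwil (hcinj h2)
            · rw [hinv] at h2; exact hl h2
            · exact hne (c l) h2
          · rw [if_neg h] at hs hcs
            rcases hs with h1 | h1 <;> subst h1 <;> rcases hcs with h2 | h2
            · exact hne (w j) h2
            · exact hcompat0 j h2.symm
            · exact hcompat0 j (by rw [← h2, hinv])
            · exact hne (v0 j) h2
        obtain ⟨Q, hQ1, hQ2⟩ := exists_transversal hinv hne _ hcond
        exact ⟨Q, hQ1, hQ2 (Or.inl rfl), hQ2 (Or.inr rfl)⟩
      choose Q hQE hQw hQ2 using hQex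
      set R : Fin d → Set S := fun j =>
        {s | s = w j ∨ (s ≠ w j ∧ s ≠ c (w j) ∧ z (j, rep s) = sd s)} with hRdef
      have hRE : ∀ j, R j ∈ ESet c := by
        intro j s
        simp only [hRdef, Set.mem_setOf_eq]
        constructor
        · intro hs hcs
          rcases hs with h | ⟨hs1, hs2, hs3⟩
          · rcases hcs with h' | ⟨_, h', _⟩
            · rw [h] at h'
              exact hne (w j) h'
            · rw [h] at h'
              exact h' rfl
          · rcases hcs with h' | ⟨h'1, h'2, h'3⟩
            · exact hs2 (by rw [← hinv s, h'])
            · rw [hrep_compl, hsd_compl] at h'3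
              rw [hs3] at h'3
              simp at h'3
        · intro hcs
          by_cases h1 : s = w j
          · exact Or.inl h1
          · by_cases h2 : s = c (w j)
            · exfalso
              apply hcs
              left
              rw [h2, hinv]
            · right
              refine ⟨h1, h2, ?_⟩
              by_contra hzz
              apply hcs
              right
              have h3 : c s ≠ w j := fun hh => h2 (by rw [← hinv s, hh])
              have h4 : c s ≠ c (w j) := fun hh => h1 (hcinj hh)
              refine ⟨h3, h4, ?_⟩
              rw [hrep_compl, hsd_compl]
              cases hb : z (j, rep s) <;> cases hc2 : sd s <;> rw [hb, hc2] at hzz <;>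
                first
                  | rfl
                  | exact absurd rfl hzz
      set BB : Fin d → Set S := fun j => if j ≠ i ∧ v0 j = w j then R j else Q j with hBBdef
      have hBBw : BB ∈ realize c w := by
        intro j
        by_cases h : j ≠ i ∧ v0 j = w j
        · refine ⟨?_, ?_⟩ <;> simp only [hBBdef, if_pos h]
          · exact hRE j
          · exact Or.inl rfl
        · refine ⟨?_, ?_⟩ <;> simp only [hBBdef, if_neg h]
          · exact hQE j
          · exact hQw j
      set B' := Function.update BB i ((BB i \ {c l}) ∪ {l}) with hB'def
      have hBBi : BB i = Q i := by
        simp only [hBBdef]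
        rw [if_neg]
        intro hh
        exact hh.1 rfl
      have hB'i : B' i = (BB i \ {c l}) ∪ {l} := Function.update_self _ _ _
      have hB'j : ∀ j, j ≠ i → B' j = BB j := fun j hj => Function.update_of_ne hj _ _
      have hB'w : B' ∈ realize c w := by
        intro j
        by_cases h : j = i
        · subst h
          refine ⟨?_, ?_⟩ <;> rw [hB'i]
          · exact flip_ESet hinv hne (hBBw j).1 l
          · exact (mem_flip_other hwil hwicl).mpr (hBBw j).2
        · refine ⟨?_, ?_⟩ <;> rw [hB'j j h]
          · exact (hBBw j).1
          · exact (hBBw j).2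
      have hB'0 : B' ∈ realize c v0 := by
        intro j
        by_cases h : j = i
        · subst h
          refine ⟨by rw [hB'i]; exact flip_ESet hinv hne (hBBw j).1 l, ?_⟩
          rw [hB'i, hv0i]
          exact Or.inr rfl
        · refine ⟨by rw [hB'j j h]; exact (hBBw j).1, ?_⟩
          rw [hB'j j h]
          by_cases h2' : j ≠ i ∧ v0 j = w j
          · simp only [hBBdef, if_pos h2']
            rw [h2'.2]
            exact Or.inl rfl
          · simp only [hBBdef, if_neg h2']
            have hq := hQ2 j
            rw [if_neg h] at hq
            exact hq
      obtain ⟨u, huT, hBu'⟩ := claim2 B' hB'w hB'0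
      have hBB2 : Function.update B' i ((B' i \ {l}) ∪ {c l}) = BB := by
        funext j
        by_cases h : j = i
        · subst h
          rw [Function.update_self, hB'i]
          have hclB : c l ∈ BB j := by
            rw [hBBi]
            have hq := hQ2 j
            rw [if_pos rfl] at hq
            exact hq
          have hlB : l ∉ BB j := fun hh => ((hBBw j).1 l).mp hh hclB
          ext s
          simp only [Set.mem_union, Set.mem_diff, Set.mem_singleton_iff]
          constructor
          · rintro (⟨h5, hsl2⟩ | hscl)
            · rcases h5 with ⟨hsB, _⟩ | hsl
              · exact hsB
              · exact absurd hsl hsl2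
            · rw [hscl]
              exact hclB
          · intro hsB
            by_cases hs1 : s = c l
            · exact Or.inr hs1
            · left
              refine ⟨Or.inl ⟨hsB, hs1⟩, ?_⟩
              intro hh
              rw [hh] at hsB
              exact hlB hsB
        · rw [Function.update_of_ne h]
          exact hB'j j h
      rw [hBB2] at hBu'
      refine ⟨u, (hmemTf u).mpr huT, ?_⟩
      intro q b hb
      simp only [hppdef] at hb
      by_cases hcond : v0 q.1 = w q.1 ∧ q.1 ≠ i ∧ u q.1 ≠ w q.1 ∧ rep (u q.1) = q.2
      · rw [if_pos hcond] at hb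
        injection hb with hb
        obtain ⟨hc1, hc2, hc3, hc4⟩ := hcond
        have huq : u q.1 ∈ BB q.1 := (hBu' q.1).2
        have hBq : BB q.1 = R q.1 := by
          simp only [hBBdef, if_pos (And.intro hc2 hc1)]
        rw [hBq] at huq
        simp only [hRdef, Set.mem_setOf_eq] at huq
        rcases huq with h' | ⟨_, _, h'⟩
        · exact absurd h' hc3
        · have hq' : q = (q.1, rep (u q.1)) := by rw [hc4]
          rw [hq', h']
          exact hb
      · rw [if_neg hcond] at hb
        simp at hb
    have hmain := TwinPairAux.exists_twin (ι := Fin d × S) Tset.ncard Tf pp (fun _ => none)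
      hTfcard hT2 h3 (fun t _ x b hb => by simp at hb) hdisjP hcovP
    obtain ⟨uf, huf, vf, hvf, hufvf, q0, b0, hb1, hb2, hrest⟩ := hmain
    have huT : uf ∈ Tset := (hmemTf uf).mp huf
    have hvT : vf ∈ Tset := (hmemTf vf).mp hvf
    have hcn1 : v0 q0.1 = w q0.1 ∧ q0.1 ≠ i ∧ uf q0.1 ≠ w q0.1 ∧ rep (uf q0.1) = q0.2 := by
      by_contra h
      simp only [hppdef] at hb1
      rw [if_neg h] at hb1
      simp at hb1
    have hcn2 : v0 q0.1 = w q0.1 ∧ q0.1 ≠ i ∧ vf q0.1 ≠ w q0.1 ∧ rep (vf q0.1) = q0.2 := by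
      by_contra h
      simp only [hppdef] at hb2
      rw [if_neg h] at hb2
      simp at hb2
    have hbu : sd (uf q0.1) = b0 := by
      simp only [hppdef] at hb1
      rw [if_pos hcn1] at hb1
      injection hb1
    have hbv : sd (vf q0.1) = !b0 := by
      simp only [hppdef] at hb2
      rw [if_pos hcn2] at hb2
      injection hb2
    have hj0 : vf q0.1 = c (uf q0.1) := by
      apply hpair_compl
      · rw [hcn2.2.2.2, hcn1.2.2.2]
      · rw [hbv, hbu]
    refine ⟨uf, huT.1, vf, hvT.1, q0.1, hj0, ?_⟩
    intro j hj
    by_cases hji : j = i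
    · subst hji
      rw [huT.2.1, hvT.2.1]
    · by_cases h0 : v0 j = w j
      · by_cases hu : uf j = w j
        · by_cases hv' : vf j = w j
          · rw [hu, hv']
          · exfalso
            have hr := hrest (j, rep (vf j)) (fun hqe => hj (congrArg Prod.fst hqe))
            simp only [hppdef] at hr
            rw [if_neg (fun hcc => hcc.2.2.1 hu), if_pos ⟨h0, hji, hv', trivial⟩] at hr
            simp at hr
        · have hr := hrest (j, rep (uf j)) (fun hqe => hj (congrArg Prod.fst hqe))
          simp only [hppdef] at hr
          rw [if_pos ⟨h0, hji, hu, trivial⟩] at hr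
          by_cases hcnd : v0 j = w j ∧ j ≠ i ∧ vf j ≠ w j ∧ rep (vf j) = rep (uf j)
          · rw [if_pos hcnd] at hr
            injection hr with hr
            exact hpair_eq _ _ hcnd.2.2.2.symm hr
          · rw [if_neg hcnd] at hr
            simp at hr
      · rw [factA uf huT j hji h0, factA vf hvT j hji h0]
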